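/- Existence of an optimal tree coupling: for a finite rooted tree with vertex weights w and all z, z′ ∈ K_T, there exists a coupling ζ of l(z) and l(z′) with Σ_{a, b ∈ L} ζ(a, b) · d_T(a, b) = Σ_{v ∈ V} w_v · |z_v − z′_v|. Consequently, the infimum over all couplings ζ of l(z) and l(z′) of Σ_{a, b} ζ(a, b) · d_T(a, b) equals Σ_{v ∈ V} w_v · |z_v − z′_v| (the Wasserstein-1 distance in the tree metric equals the weighted ℓ1 distance on K_T). -/

import Mathlib

open Classical Finset

/-- The children of a vertex `u` in a rooted tree with root `r` and parent map `par`. -/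
noncomputable def children {V : Type*} [Fintype V] (r : V) (par : V → V) (u : V) : Finset V :=
  Finset.univ.filter (fun v => v ≠ r ∧ par v = u)

/-- A vertex is a leaf if it has no children. -/
def IsLeaf {V : Type*} [Fintype V] (r : V) (par : V → V) (v : V) : Prop :=
  children r par v = ∅

/-- The set of leaves of the tree. -/
noncomputable def leaves {V : Type*} [Fintype V] (r : V) (par : V → V) : Finset V :=
  Finset.univ.filter (fun v => IsLeaf r par v)

/-- The leaves below a vertex `v`: leaves `l` with `par^[n] l = v` for some `n ≥ 0`. -/
noncomputable def leavesBelow {V : Type*} [Fintype V] (r : V) (par : V → V) (v : V) :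
    Finset V :=
  (leaves r par).filter (fun l => ∃ n : ℕ, par^[n] l = v)

/-- The tree distance between leaves `a, b`:
`d_T(a,b) = Σ_v w_v · |1[a ∈ L(v)] − 1[b ∈ L(v)]|`. -/
noncomputable def treeDist {V : Type*} [Fintype V] (r : V) (par : V → V) (w : V → ℝ)
    (a b : V) : ℝ :=
  ∑ v : V, w v * |(if a ∈ leavesBelow r par v then (1 : ℝ) else 0)
    - (if b ∈ leavesBelow r par v then (1 : ℝ) else 0)|

noncomputable def strictBelow {V : Type*} [Fintype V] (r : V) (par : V → V) (v : V) :
    Finset V :=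
  Finset.univ.filter (fun u => u ≠ v ∧ ∃ n : ℕ, par^[n] u = v)

section Basic
variable {V : Type*} [Fintype V] {r : V} {par : V → V}

lemma mem_children {c u : V} : c ∈ children r par u ↔ c ≠ r ∧ par c = u := by
  simp [children]

lemma mem_strictBelow {u v : V} :
    u ∈ strictBelow r par v ↔ u ≠ v ∧ ∃ n : ℕ, par^[n] u = v := by
  simp [strictBelow]

lemma mem_leavesBelow {l v : V} :
    l ∈ leavesBelow r par v ↔ l ∈ leaves r par ∧ ∃ n : ℕ, par^[n] l = v := by
  simp [leavesBelow]

lemma cycle_root (hroot : par r = r) (hreach : ∀ v : V, ∃ n : ℕ, par^[n] v = r)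
    {v : V} {k : ℕ} (hk : k ≠ 0) (h : par^[k] v = v) : v = r := by
  obtain ⟨n, hn⟩ := hreach v
  have hmk : ∀ m : ℕ, par^[m * k] v = v := by
    intro m
    induction m with
    | zero => simp
    | succ m ih =>
      rw [Nat.succ_mul, Function.iterate_add_apply, h, ih]
  have h1 : par^[n * k] v = v := hmk n
  have h2 : n * k = (n * k - n) + n := by
    have : n ≤ n * k := Nat.le_mul_of_pos_right n (Nat.pos_of_ne_zero hk)
    omega
  rw [h2, Function.iterate_add_apply, hn, Function.iterate_fixed hroot] at h1
  exact h1.symm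

lemma comparable {x u v : V} {n m : ℕ} (hn : par^[n] x = u) (hm : par^[m] x = v) :
    (∃ k, par^[k] u = v) ∨ (∃ k, par^[k] v = u) := by
  rcases le_total n m with h | h
  · left; exact ⟨m - n, by rw [← hn, ← Function.iterate_add_apply, Nat.sub_add_cancel h, hm]⟩
  · right; exact ⟨n - m, by rw [← hm, ← Function.iterate_add_apply, Nat.sub_add_cancel h, hn]⟩

lemma below_trans {x u v : V} (h1 : ∃ n, par^[n] x = u) (h2 : ∃ n, par^[n] u = v) :
    ∃ n, par^[n] x = v := by
  obtain ⟨n, hn⟩ := h1; obtain ⟨m, hm⟩ := h2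
  exact ⟨m + n, by rw [Function.iterate_add_apply, hn, hm]⟩

lemma leavesBelow_mono {u v : V} (h : ∃ n, par^[n] u = v) :
    leavesBelow r par u ⊆ leavesBelow r par v := by
  intro l hl
  rw [mem_leavesBelow] at hl ⊢
  exact ⟨hl.1, below_trans hl.2 h⟩

/-- A vertex cannot be strictly below one of its children. -/
lemma not_below_child (hroot : par r = r) (hreach : ∀ v : V, ∃ n : ℕ, par^[n] v = r)
    {v c : V} (hc : c ∈ children r par v) (h : ∃ n, par^[n] v = c) : False := by
  rw [mem_children] at hc
  obtain ⟨m, hm⟩ := h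
  have hcyc : par^[m + 1] v = v := by
    rw [Function.iterate_succ_apply', hm, hc.2]
  have := cycle_root hroot hreach (by omega : m + 1 ≠ 0) hcyc
  subst this
  exact hc.1 (by rw [← hm, Function.iterate_fixed hroot])

/-- Nothing is below two distinct children of the same vertex. -/
lemma below_children_disjoint (hroot : par r = r) (hreach : ∀ v : V, ∃ n : ℕ, par^[n] v = r)
    {v c c' x : V} (hc : c ∈ children r par v) (hc' : c' ∈ children r par v)
    (hne : c ≠ c') (h1 : ∃ n, par^[n] x = c) (h2 : ∃ n, par^[n] x = c') : False := by
  obtain ⟨n, hn⟩ := h1; obtain ⟨m, hm⟩ := h2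
  rcases comparable hn hm with ⟨k, hk⟩ | ⟨k, hk⟩
  · -- par^[k] c = c', c ≠ c', so k ≠ 0
    have hk0 : k ≠ 0 := by rintro rfl; exact hne hk
    obtain ⟨j, rfl⟩ : ∃ j, k = j + 1 := ⟨k - 1, by omega⟩
    rw [Function.iterate_succ_apply, (mem_children.mp hc).2] at hk
    exact not_below_child hroot hreach hc' ⟨j, hk⟩
  · have hk0 : k ≠ 0 := by rintro rfl; exact hne hk.symm
    obtain ⟨j, rfl⟩ : ∃ j, k = j + 1 := ⟨k - 1, by omega⟩
    rw [Function.iterate_succ_apply, (mem_children.mp hc').2] at hk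
    exact not_below_child hroot hreach hc ⟨j, hk⟩

/-- If `x` is strictly below `v` then it is below some child of `v`. -/
lemma exists_child_step (hroot : par r = r) {x v : V} (hx : x ≠ v)
    (hex : ∃ n : ℕ, par^[n] x = v) : ∃ c ∈ children r par v, ∃ m, par^[m] x = c := by
  have hn := Nat.find_spec hex
  have hn0 : Nat.find hex ≠ 0 := by
    intro h0; rw [h0] at hn; exact hx hn
  obtain ⟨m, hm⟩ : ∃ m, Nat.find hex = m + 1 := ⟨Nat.find hex - 1, by omega⟩
  rw [hm, Function.iterate_succ_apply'] at hn
  have hcr : par^[m] x ≠ r := by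
    intro hcr
    have hvr : v = r := by rw [← hn, hcr, hroot]
    exact Nat.find_min hex (by omega : m < Nat.find hex) (by rw [hcr, hvr])
  exact ⟨par^[m] x, mem_children.mpr ⟨hcr, hn⟩, m, rfl⟩

lemma leavesBelow_leaf (hroot : par r = r) {v : V} (hv : IsLeaf r par v)
    (hvleaf : v ∈ leaves r par) : leavesBelow r par v = {v} := by
  ext l
  rw [mem_leavesBelow, Finset.mem_singleton]
  constructor
  · rintro ⟨hl, hex⟩
    by_contra hlv
    obtain ⟨c, hc, -⟩ := exists_child_step hroot hlv hex
    rw [IsLeaf] at hv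
    rw [hv] at hc
    exact absurd hc (Finset.notMem_empty c)
  · rintro rfl
    exact ⟨hvleaf, ⟨0, rfl⟩⟩

/-- The strict-below set decomposes along children. -/
lemma strictBelow_eq_biUnion (hroot : par r = r) (hreach : ∀ v : V, ∃ n : ℕ, par^[n] v = r)
    (v : V) :
    strictBelow r par v
      = (children r par v).biUnion (fun c => insert c (strictBelow r par c)) := by
  ext u
  simp only [Finset.mem_biUnion, Finset.mem_insert, mem_strictBelow]
  constructor
  · rintro ⟨huv, hex⟩
    obtain ⟨c, hc, m, hm⟩ := exists_child_step hroot huv hex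
    refine ⟨c, hc, ?_⟩
    by_cases huc : u = c
    · exact Or.inl huc
    · exact Or.inr ⟨huc, m, hm⟩
  · rintro ⟨c, hc, hu⟩
    have hbel : ∃ n, par^[n] u = c := by
      rcases hu with rfl | ⟨-, h⟩
      · exact ⟨0, rfl⟩
      · exact h
    have hbelv : ∃ n, par^[n] u = v :=
      below_trans hbel ⟨1, by simpa using (mem_children.mp hc).2⟩
    refine ⟨?_, hbelv⟩
    rintro rfl
    exact not_below_child hroot hreach hc hbel

lemma children_pieces_disjoint (hroot : par r = r) (hreach : ∀ v : V, ∃ n : ℕ, par^[n] v = r)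
    (v : V) : (↑(children r par v) : Set V).Pairwise
      (fun c c' => Disjoint (insert c (strictBelow r par c)) (insert c' (strictBelow r par c'))) := by
  intro c hc c' hc' hne
  rw [Finset.disjoint_left]
  intro u hu hu'
  simp only [Finset.mem_insert, mem_strictBelow] at hu hu'
  have h1 : ∃ n, par^[n] u = c := by
    rcases hu with rfl | ⟨-, h⟩; exacts [⟨0, rfl⟩, h]
  have h2 : ∃ n, par^[n] u = c' := by
    rcases hu' with rfl | ⟨-, h⟩; exacts [⟨0, rfl⟩, h]
  exact below_children_disjoint hroot hreach (by simpa using hc) (by simpa using hc') hne h1 h2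

/-- Leaves below a non-leaf decompose along children. -/
lemma leavesBelow_eq_biUnion (hroot : par r = r) {v : V} (hv : ¬ IsLeaf r par v) :
    leavesBelow r par v = (children r par v).biUnion (fun c => leavesBelow r par c) := by
  ext l
  simp only [Finset.mem_biUnion, mem_leavesBelow]
  constructor
  · rintro ⟨hl, hex⟩
    have hlv : l ≠ v := by
      rintro rfl
      exact hv (Finset.mem_filter.mp hl).2
    obtain ⟨c, hc, m, hm⟩ := exists_child_step hroot hlv hex
    exact ⟨c, hc, hl, m, hm⟩
  · rintro ⟨c, hc, hl, hex⟩
    exact ⟨hl, below_trans hex ⟨1, by simpa using (mem_children.mp hc).2⟩⟩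

lemma leavesBelow_children_disjoint (hroot : par r = r)
    (hreach : ∀ v : V, ∃ n : ℕ, par^[n] v = r) (v : V) :
    (↑(children r par v) : Set V).Pairwise
      (fun c c' => Disjoint (leavesBelow r par c) (leavesBelow r par c')) := by
  intro c hc c' hc' hne
  rw [Finset.disjoint_left]
  intro l hl hl'
  rw [mem_leavesBelow] at hl hl'
  exact below_children_disjoint hroot hreach (by simpa using hc) (by simpa using hc') hne hl.2 hl'.2

lemma leavesBelow_root (hreach : ∀ v : V, ∃ n : ℕ, par^[n] v = r) :
    leavesBelow r par r = leaves r par := by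
  ext l
  rw [mem_leavesBelow]
  exact ⟨fun h => h.1, fun h => ⟨h, hreach l⟩⟩

lemma leavesBelow_subset_leaves (v : V) : leavesBelow r par v ⊆ leaves r par :=
  Finset.filter_subset _ _

end Basic

section Induction
variable {V : Type*} [Fintype V] {r : V} {par : V → V}

lemma depth_lt_card (hreach : ∀ v : V, ∃ n : ℕ, par^[n] v = r) (v : V) :
    Nat.find (hreach v) < Fintype.card V := by
  set d := Nat.find (hreach v) with hd
  have key : ∀ i j : ℕ, i < j → j ≤ d → par^[i] v ≠ par^[j] v := by
    intro i j hij hjd heq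
    have hspec : par^[d] v = r := Nat.find_spec (hreach v)
    have h1 : par^[(d - j) + j] v = r := by rwa [Nat.sub_add_cancel hjd]
    rw [Function.iterate_add_apply, ← heq, ← Function.iterate_add_apply] at h1
    exact Nat.find_min (hreach v) (by omega : d - j + i < d) h1
  have hinj : Function.Injective (fun i : Fin (d + 1) => par^[(i : ℕ)] v) := by
    intro i j hij
    simp only at hij
    by_contra hne
    rcases Nat.lt_or_ge (i : ℕ) (j : ℕ) with h | h
    · exact key i j h (by omega) hij
    · have h' : (j : ℕ) < (i : ℕ) := by
        rcases Nat.lt_or_ge (j : ℕ) (i : ℕ) with h' | h'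
        · exact h'
        · exact absurd (Fin.ext (by omega)) hne
      exact key j i h' (by omega) hij.symm
  have h2 := Fintype.card_le_of_injective _ hinj
  rw [Fintype.card_fin] at h2
  omega

lemma depth_child_gt (hreach : ∀ v : V, ∃ n : ℕ, par^[n] v = r)
    {v c : V} (hc : c ∈ children r par v) :
    Nat.find (hreach v) < Nat.find (hreach c) := by
  obtain ⟨hcr, hpc⟩ := mem_children.mp hc
  have hspec := Nat.find_spec (hreach c)
  have h0 : Nat.find (hreach c) ≠ 0 := by
    intro h; rw [h] at hspec; exact hcr hspec
  obtain ⟨m, hm⟩ : ∃ m, Nat.find (hreach c) = m + 1 := ⟨Nat.find (hreach c) - 1, by omega⟩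
  rw [hm, Function.iterate_succ_apply, hpc] at hspec
  have := Nat.find_min' (hreach v) hspec
  omega

lemma tree_induction (hroot : par r = r) (hreach : ∀ v : V, ∃ n : ℕ, par^[n] v = r)
    (P : V → Prop) (h : ∀ v, (∀ c ∈ children r par v, P c) → P v) : ∀ v, P v := by
  suffices H : ∀ k : ℕ, ∀ v : V, Fintype.card V ≤ Nat.find (hreach v) + k → P v by
    intro v
    exact H (Fintype.card V) v (Nat.le_add_left _ _)
  intro k
  induction k with
  | zero =>
    intro v hv
    exact absurd hv (by simpa using depth_lt_card hreach v)
  | succ k ih =>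
    intro v hv
    refine h v (fun c hc => ih c ?_)
    have := depth_child_gt hreach hc
    omega

/-- mass of a vertex equals total leaf mass below it. -/
lemma mass_eq (hroot : par r = r) (hreach : ∀ v : V, ∃ n : ℕ, par^[n] v = r)
    {z : V → ℝ} (hzs : ∀ u, ¬ IsLeaf r par u → z u = ∑ c ∈ children r par u, z c) :
    ∀ v, z v = ∑ a ∈ leavesBelow r par v, z a := by
  refine tree_induction hroot hreach _ (fun v hind => ?_)
  by_cases hv : IsLeaf r par v
  · rw [leavesBelow_leaf hroot hv (by simp [leaves, hv]), Finset.sum_singleton]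
  · rw [hzs v hv, leavesBelow_eq_biUnion hroot hv,
      Finset.sum_biUnion (leavesBelow_children_disjoint hroot hreach v)]
    exact Finset.sum_congr rfl hind

end Induction

noncomputable def Wt {V : Type*} [Fintype V] (r : V) (par : V → V) (w : V → ℝ) (v a : V) : ℝ :=
  ∑ u ∈ strictBelow r par v, w u * (if a ∈ leavesBelow r par u then (1:ℝ) else 0)

section Dist
variable {V : Type*} [Fintype V] {r : V} {par : V → V} {w : V → ℝ}

lemma Wt_nonneg (hw : ∀ v, 0 ≤ w v) (v a : V) : 0 ≤ Wt r par w v a :=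
  Finset.sum_nonneg fun u _ => mul_nonneg (hw u) (by positivity)

lemma treeDist_le (hroot : par r = r) (hreach : ∀ v : V, ∃ n : ℕ, par^[n] v = r)
    (hw : ∀ v, 0 ≤ w v) {v a b : V}
    (ha : a ∈ leavesBelow r par v) (hb : b ∈ leavesBelow r par v) :
    treeDist r par w a b ≤ Wt r par w v a + Wt r par w v b := by
  have hsum : Wt r par w v a + Wt r par w v b
      = ∑ u : V, (if u ∈ strictBelow r par v then
          w u * ((if a ∈ leavesBelow r par u then (1:ℝ) else 0)
            + (if b ∈ leavesBelow r par u then (1:ℝ) else 0)) else 0) := by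
    rw [Wt, Wt, ← Finset.sum_add_distrib]
    rw [strictBelow]
    rw [Finset.sum_filter]
    refine Finset.sum_congr rfl fun u _ => ?_
    by_cases h : u ≠ v ∧ ∃ n : ℕ, par^[n] u = v <;> simp [h, mul_add, strictBelow]
  rw [hsum, treeDist]
  refine Finset.sum_le_sum fun u _ => ?_
  by_cases hu : u ∈ strictBelow r par v
  · simp only [hu, if_true]
    refine mul_le_mul_of_nonneg_left ?_ (hw u)
    have h1 : ∀ x : V, (0:ℝ) ≤ (if x ∈ leavesBelow r par u then (1:ℝ) else 0) := by
      intro x; positivity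
    calc |(if a ∈ leavesBelow r par u then (1:ℝ) else 0)
          - (if b ∈ leavesBelow r par u then (1:ℝ) else 0)|
        ≤ |(if a ∈ leavesBelow r par u then (1:ℝ) else 0)|
          + |(if b ∈ leavesBelow r par u then (1:ℝ) else 0)| := abs_sub _ _
      _ = _ := by rw [abs_of_nonneg (h1 a), abs_of_nonneg (h1 b)]
  · simp only [hu, if_false]
    have heq : (a ∈ leavesBelow r par u ↔ b ∈ leavesBelow r par u) := by
      rw [mem_strictBelow, not_and_or] at hu
      constructor
      · intro hau
        obtain ⟨n, hn⟩ := (mem_leavesBelow.mp hau).2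
        obtain ⟨m, hm⟩ := (mem_leavesBelow.mp ha).2
        rcases comparable hn hm with h | h
        · rcases hu with hu | hu
          · push_neg at hu; subst hu; exact hb
          · exact absurd h hu
        · exact leavesBelow_mono h hb
      · intro hbu
        obtain ⟨n, hn⟩ := (mem_leavesBelow.mp hbu).2
        obtain ⟨m, hm⟩ := (mem_leavesBelow.mp hb).2
        rcases comparable hn hm with h | h
        · rcases hu with hu | hu
          · push_neg at hu; subst hu; exact ha
          · exact absurd h hu
        · exact leavesBelow_mono h ha
    by_cases hau : a ∈ leavesBelow r par u
    · simp [hau, heq.mp hau]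
    · have hbu : b ∉ leavesBelow r par u := fun hbu => hau (heq.mpr hbu)
      simp [hau, hbu]

lemma Wt_child (hroot : par r = r) (hreach : ∀ v : V, ∃ n : ℕ, par^[n] v = r)
    {v c a : V} (hc : c ∈ children r par v) (ha : a ∈ leavesBelow r par c) :
    Wt r par w v a = w c + Wt r par w c a := by
  rw [Wt, strictBelow_eq_biUnion hroot hreach,
    Finset.sum_biUnion (children_pieces_disjoint hroot hreach v)]
  have h0 : ∀ c' ∈ children r par v, c' ≠ c →
      (∑ u ∈ insert c' (strictBelow r par c'),
        w u * (if a ∈ leavesBelow r par u then (1:ℝ) else 0)) = 0 := by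
    intro c' hc' hne
    refine Finset.sum_eq_zero fun u hu => ?_
    have hbel : ∃ n, par^[n] u = c' := by
      rcases Finset.mem_insert.mp hu with rfl | h
      · exact ⟨0, rfl⟩
      · exact (mem_strictBelow.mp h).2
    have : a ∉ leavesBelow r par u := by
      intro hau
      exact below_children_disjoint hroot hreach hc hc' (Ne.symm hne)
        (mem_leavesBelow.mp ha).2 (below_trans (mem_leavesBelow.mp hau).2 hbel)
    simp [this]
  rw [Finset.sum_eq_single_of_mem c hc h0,
    Finset.sum_insert (by simp [mem_strictBelow])]
  simp [ha, Wt]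

lemma budget_split (hroot : par r = r) (hreach : ∀ v : V, ∃ n : ℕ, par^[n] v = r)
    (v : V) (g : V → ℝ) :
    ∑ u ∈ strictBelow r par v, g u
      = ∑ c ∈ children r par v, (g c + ∑ u ∈ strictBelow r par c, g u) := by
  rw [strictBelow_eq_biUnion hroot hreach,
    Finset.sum_biUnion (children_pieces_disjoint hroot hreach v)]
  refine Finset.sum_congr rfl fun c _ => ?_
  rw [Finset.sum_insert (by simp [mem_strictBelow])]

end Dist
section Key
variable {V : Type*} [Fintype V] {r : V} {par : V → V} {w : V → ℝ}

lemma max_add_max_neg (x : ℝ) : max x 0 + max (-x) 0 = |x| := by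
  rcases le_total x 0 with h | h
  · rw [max_eq_right h, max_eq_left (by linarith), abs_of_nonpos h, zero_add]
  · rw [max_eq_left h, max_eq_right (by linarith), abs_of_nonneg h, add_zero]

lemma max_sub_max_neg (x : ℝ) : max x 0 - max (-x) 0 = x := by
  rcases le_total x 0 with h | h
  · rw [max_eq_right h, max_eq_left (by linarith)]; ring
  · rw [max_eq_left h, max_eq_right (by linarith)]; ring

lemma treeDist_self (a : V) : treeDist r par w a a = 0 := by
  simp [treeDist]

lemma key_construction (hroot : par r = r) (hreach : ∀ v : V, ∃ n : ℕ, par^[n] v = r)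
    (hw : ∀ v, 0 ≤ w v) {z z' : V → ℝ}
    (hz0 : ∀ v, 0 ≤ z v) (hz0' : ∀ v, 0 ≤ z' v)
    (hzs : ∀ u, ¬ IsLeaf r par u → z u = ∑ c ∈ children r par u, z c)
    (hzs' : ∀ u, ¬ IsLeaf r par u → z' u = ∑ c ∈ children r par u, z' c) :
    ∀ v : V, ∃ ζ : V → V → ℝ, ∃ lv fv : V → ℝ,
      (∀ a b, 0 ≤ ζ a b) ∧ (∀ a, 0 ≤ lv a) ∧ (∀ b, 0 ≤ fv b) ∧
      (∀ a b, ζ a b ≠ 0 → a ∈ leavesBelow r par v ∧ b ∈ leavesBelow r par v) ∧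
      (∀ a, lv a ≠ 0 → a ∈ leavesBelow r par v) ∧
      (∀ b, fv b ≠ 0 → b ∈ leavesBelow r par v) ∧
      (∀ a ∈ leavesBelow r par v, (∑ b ∈ leavesBelow r par v, ζ a b) + lv a = z a) ∧
      (∀ b ∈ leavesBelow r par v, (∑ a ∈ leavesBelow r par v, ζ a b) + fv b = z' b) ∧
      (∑ a ∈ leavesBelow r par v, lv a) = max (z v - z' v) 0 ∧
      (∑ b ∈ leavesBelow r par v, fv b) = max (z' v - z v) 0 ∧
      (∑ a ∈ leavesBelow r par v, ∑ b ∈ leavesBelow r par v, ζ a b * treeDist r par w a b)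
        + (∑ a ∈ leavesBelow r par v, lv a * Wt r par w v a)
        + (∑ b ∈ leavesBelow r par v, fv b * Wt r par w v b)
        ≤ ∑ u ∈ strictBelow r par v, w u * |z u - z' u| := by
  refine tree_induction hroot hreach _ (fun v hind => ?_)
  by_cases hv : IsLeaf r par v
  · -- leaf case
    have hvleaf : v ∈ leaves r par := by simp [leaves, hv]
    have hLB : leavesBelow r par v = {v} := leavesBelow_leaf hroot hv hvleaf
    have hSB : strictBelow r par v = ∅ := by
      rw [strictBelow_eq_biUnion hroot hreach v]
      rw [IsLeaf] at hv
      rw [hv]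
      simp
    refine ⟨fun a b => if a = v ∧ b = v then min (z v) (z' v) else 0,
      fun a => if a = v then max (z v - z' v) 0 else 0,
      fun b => if b = v then max (z' v - z v) 0 else 0,
      ?_, ?_, ?_, ?_, ?_, ?_, ?_, ?_, ?_, ?_, ?_⟩
    · intro a b
      dsimp only
      split
      · exact le_min (hz0 v) (hz0' v)
      · exact le_rfl
    · intro a; dsimp only; split; exacts [le_max_right _ _, le_rfl]
    · intro b; dsimp only; split; exacts [le_max_right _ _, le_rfl]
    · intro a b h
      rw [hLB]
      by_cases hab : a = v ∧ b = v
      · simp [hab.1, hab.2]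
      · simp [hab] at h
    · intro a h
      rw [hLB]
      by_cases ha : a = v
      · simp [ha]
      · simp [ha] at h
    · intro b h
      rw [hLB]
      by_cases hb : b = v
      · simp [hb]
      · simp [hb] at h
    · intro a ha
      rw [hLB] at ha ⊢
      rw [Finset.mem_singleton] at ha
      rw [ha]
      rw [Finset.sum_singleton]
      simp only [and_self, if_true]
      rcases le_total (z v) (z' v) with h | h
      · rw [min_eq_left h, max_eq_right (by linarith)]; ring
      · rw [min_eq_right h, max_eq_left (by linarith)]; ring
    · intro b hb
      rw [hLB] at hb ⊢
      rw [Finset.mem_singleton] at hb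
      rw [hb]
      rw [Finset.sum_singleton]
      simp only [and_self, if_true]
      rcases le_total (z v) (z' v) with h | h
      · rw [min_eq_left h, max_eq_left (by linarith)]; ring
      · rw [min_eq_right h, max_eq_right (by linarith)]; ring
    · rw [hLB, Finset.sum_singleton]; simp
    · rw [hLB, Finset.sum_singleton]; simp
    · rw [hLB, hSB]
      simp [treeDist_self, Wt, hSB]
  · -- non-leaf case
    have hdjp := leavesBelow_children_disjoint hroot hreach v
    choose! ζf lf ff hpos hlpos hfpos hsupp hlsupp hfsupp hmarg hmarg' hlsum hfsum hcost
      using hind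
    set C := children r par v with hC
    have hCsub : ∀ c ∈ C, leavesBelow r par c ⊆ leavesBelow r par v := fun c hc =>
      leavesBelow_mono ⟨1, by simpa using (mem_children.mp hc).2⟩
    have hdj : ∀ c ∈ C, ∀ c' ∈ C, c ≠ c' → ∀ x, x ∈ leavesBelow r par c →
        x ∈ leavesBelow r par c' → False := by
      intro c hc c' hc' hne x h1 h2
      exact Finset.disjoint_left.mp (hdjp (Finset.mem_coe.mpr hc) (Finset.mem_coe.mpr hc') hne) h1 h2
    have hmemc : ∀ a ∈ leavesBelow r par v, ∃ c ∈ C, a ∈ leavesBelow r par c := by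
      intro a ha
      rw [leavesBelow_eq_biUnion hroot hv, Finset.mem_biUnion] at ha
      exact ha
    have hrestr : ∀ c ∈ C, ∀ (g : V → ℝ), (∀ a, g a ≠ 0 → a ∈ leavesBelow r par c) →
        ∑ a ∈ leavesBelow r par v, g a = ∑ a ∈ leavesBelow r par c, g a := by
      intro c hc g hg
      refine (Finset.sum_subset (hCsub c hc) ?_).symm
      intro a _ hna
      by_contra h0
      exact hna (hg a h0)
    set L : V → ℝ := fun a => ∑ c ∈ C, lf c a with hL
    set F : V → ℝ := fun b => ∑ c ∈ C, ff c b with hF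
    set E := ∑ c ∈ C, max (z c - z' c) 0 with hEdef
    set E' := ∑ c ∈ C, max (z' c - z c) 0 with hE'def
    set M := max E E' with hMdef
    have hE0 : 0 ≤ E := Finset.sum_nonneg fun c _ => le_max_right _ _
    have hE'0 : 0 ≤ E' := Finset.sum_nonneg fun c _ => le_max_right _ _
    have hEM : E ≤ M := le_max_left _ _
    have hE'M : E' ≤ M := le_max_right _ _
    have hLpos : ∀ a, 0 ≤ L a := fun a => Finset.sum_nonneg fun c hc => hlpos c hc a
    have hFpos : ∀ b, 0 ≤ F b := fun b => Finset.sum_nonneg fun c hc => hfpos c hc b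
    have hLsupp : ∀ a, L a ≠ 0 → a ∈ leavesBelow r par v := by
      intro a h
      by_contra hna
      refine h (Finset.sum_eq_zero fun c hc => ?_)
      by_contra h0
      exact hna (hCsub c hc (hlsupp c hc a h0))
    have hFsupp : ∀ b, F b ≠ 0 → b ∈ leavesBelow r par v := by
      intro b h
      by_contra hnb
      refine h (Finset.sum_eq_zero fun c hc => ?_)
      by_contra h0
      exact hnb (hCsub c hc (hfsupp c hc b h0))
    have hLsum : ∑ a ∈ leavesBelow r par v, L a = E := by
      rw [hL, hEdef, Finset.sum_comm]
      refine Finset.sum_congr rfl fun c hc => ?_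
      rw [hrestr c hc (lf c) (fun a => hlsupp c hc a)]
      exact hlsum c hc
    have hFsum : ∑ b ∈ leavesBelow r par v, F b = E' := by
      rw [hF, hE'def, Finset.sum_comm]
      refine Finset.sum_congr rfl fun c hc => ?_
      rw [hrestr c hc (ff c) (fun b => hfsupp c hc b)]
      exact hfsum c hc
    have hzv : z v - z' v = E - E' := by
      rw [hzs v hv, hzs' v hv, hEdef, hE'def, ← Finset.sum_sub_distrib,
        ← Finset.sum_sub_distrib]
      refine Finset.sum_congr rfl fun c _ => ?_
      rw [show z' c - z c = -(z c - z' c) by ring, max_sub_max_neg]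
    -- row/column sums of γ
    have hrowγ : ∀ a, ∑ b ∈ leavesBelow r par v, (if M = 0 then (0:ℝ) else L a * F b / M)
        = (if M = 0 then 0 else L a * E' / M) := by
      intro a
      by_cases h : M = 0
      · simp [h]
      · simp only [h, if_false]
        rw [← Finset.sum_div, ← Finset.mul_sum, hFsum]
    have hcolγ : ∀ b, ∑ a ∈ leavesBelow r par v, (if M = 0 then (0:ℝ) else L a * F b / M)
        = (if M = 0 then 0 else E * F b / M) := by
      intro b
      by_cases h : M = 0
      · simp [h]
      · simp only [h, if_false]
        rw [← Finset.sum_div, ← Finset.sum_mul, hLsum]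
    have hrowfull : ∀ a, (if M = 0 then (0:ℝ) else L a * E' / M)
        + (if M = 0 then L a else L a * ((M - E') / M)) = L a := by
      intro a
      by_cases h : M = 0
      · simp [h]
      · simp only [h, if_false]
        field_simp
        ring
    have hcolfull : ∀ b, (if M = 0 then (0:ℝ) else E * F b / M)
        + (if M = 0 then F b else F b * ((M - E) / M)) = F b := by
      intro b
      by_cases h : M = 0
      · simp [h]
      · simp only [h, if_false]
        field_simp
        ring
    refine ⟨fun a b => (∑ c ∈ C, ζf c a b) + (if M = 0 then 0 else L a * F b / M),
      fun a => if M = 0 then L a else L a * ((M - E') / M),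
      fun b => if M = 0 then F b else F b * ((M - E) / M),
      ?_, ?_, ?_, ?_, ?_, ?_, ?_, ?_, ?_, ?_, ?_⟩
    · intro a b
      have h1 : 0 ≤ ∑ c ∈ C, ζf c a b := Finset.sum_nonneg fun c hc => hpos c hc a b
      have h2 : (0:ℝ) ≤ if M = 0 then 0 else L a * F b / M := by
        split
        · exact le_rfl
        · have hMpos : 0 < M := lt_of_le_of_ne (hE0.trans hEM) (Ne.symm (by assumption))
          exact div_nonneg (mul_nonneg (hLpos a) (hFpos b)) hMpos.le
      dsimp only
      linarith
    · intro a
      dsimp only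
      split
      · exact hLpos a
      · have hMpos : 0 < M := lt_of_le_of_ne (hE0.trans hEM) (Ne.symm (by assumption))
        have : 0 ≤ (M - E') / M := div_nonneg (by linarith) hMpos.le
        exact mul_nonneg (hLpos a) this
    · intro b
      dsimp only
      split
      · exact hFpos b
      · have hMpos : 0 < M := lt_of_le_of_ne (hE0.trans hEM) (Ne.symm (by assumption))
        have : 0 ≤ (M - E) / M := div_nonneg (by linarith) hMpos.le
        exact mul_nonneg (hFpos b) this
    · intro a b h
      dsimp only at h
      by_cases h1 : (∑ c ∈ C, ζf c a b) ≠ 0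
      · obtain ⟨c, hc, h0⟩ := Finset.exists_ne_zero_of_sum_ne_zero h1
        exact ⟨hCsub c hc (hsupp c hc a b h0).1, hCsub c hc (hsupp c hc a b h0).2⟩
      · push_neg at h1
        rw [h1, zero_add] at h
        have h2 : L a * F b / M ≠ 0 := by
          intro h0
          apply h
          split
          · rfl
          · exact h0
        have hLa : L a ≠ 0 := by
          intro h0
          exact h2 (by rw [h0]; ring)
        have hFb : F b ≠ 0 := by
          intro h0
          exact h2 (by rw [h0]; ring)
        exact ⟨hLsupp a hLa, hFsupp b hFb⟩
    · intro a h
      dsimp only at h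
      have hLa : L a ≠ 0 := by
        intro h0
        apply h
        split
        · exact h0
        · rw [h0]; ring
      exact hLsupp a hLa
    · intro b h
      dsimp only at h
      have hFb : F b ≠ 0 := by
        intro h0
        apply h
        split
        · exact h0
        · rw [h0]; ring
      exact hFsupp b hFb
    · -- row marginal
      intro a ha
      obtain ⟨c₀, hc₀, hac₀⟩ := hmemc a ha
      have hζz : ∀ c ∈ C, c ≠ c₀ → ∀ b, ζf c a b = 0 := by
        intro c hc hne b
        by_contra h0
        exact hdj c hc c₀ hc₀ hne a (hsupp c hc a b h0).1 hac₀
      have hlz : ∀ c ∈ C, c ≠ c₀ → lf c a = 0 := by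
        intro c hc hne
        by_contra h0
        exact hdj c hc c₀ hc₀ hne a (hlsupp c hc a h0) hac₀
      have hLa : L a = lf c₀ a := by
        rw [hL]
        exact Finset.sum_eq_single_of_mem c₀ hc₀ (fun c hc hne => hlz c hc hne)
      have hsum1 : ∑ b ∈ leavesBelow r par v, (∑ c ∈ C, ζf c a b) = z a - lf c₀ a := by
        rw [Finset.sum_comm,
          Finset.sum_eq_single_of_mem c₀ hc₀
            (fun c hc hne => Finset.sum_eq_zero fun b _ => hζz c hc hne b),
          hrestr c₀ hc₀ _ (fun b h0 => (hsupp c₀ hc₀ a b h0).2)]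
        have := hmarg c₀ hc₀ a hac₀
        linarith
      dsimp only
      rw [Finset.sum_add_distrib, hsum1, hrowγ a, hLa]
      have h1 := hrowfull a
      rw [hLa] at h1
      linarith
    · -- column marginal
      intro b hb
      obtain ⟨c₀, hc₀, hbc₀⟩ := hmemc b hb
      have hζz : ∀ c ∈ C, c ≠ c₀ → ∀ a, ζf c a b = 0 := by
        intro c hc hne a
        by_contra h0
        exact hdj c hc c₀ hc₀ hne b (hsupp c hc a b h0).2 hbc₀
      have hfz : ∀ c ∈ C, c ≠ c₀ → ff c b = 0 := by
        intro c hc hne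
        by_contra h0
        exact hdj c hc c₀ hc₀ hne b (hfsupp c hc b h0) hbc₀
      have hFb : F b = ff c₀ b := by
        rw [hF]
        exact Finset.sum_eq_single_of_mem c₀ hc₀ (fun c hc hne => hfz c hc hne)
      have hsum1 : ∑ a ∈ leavesBelow r par v, (∑ c ∈ C, ζf c a b) = z' b - ff c₀ b := by
        rw [Finset.sum_comm,
          Finset.sum_eq_single_of_mem c₀ hc₀
            (fun c hc hne => Finset.sum_eq_zero fun a _ => hζz c hc hne a),
          hrestr c₀ hc₀ _ (fun a h0 => (hsupp c₀ hc₀ a b h0).1)]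
        have := hmarg' c₀ hc₀ b hbc₀
        linarith
      dsimp only
      rw [Finset.sum_add_distrib, hsum1, hcolγ b, hFb]
      have h1 := hcolfull b
      rw [hFb] at h1
      linarith
    · -- lv total
      dsimp only
      rw [hzv]
      by_cases h : M = 0
      · have hE : E = 0 := le_antisymm (hEM.trans h.le) hE0
        have hE' : E' = 0 := le_antisymm (hE'M.trans h.le) hE'0
        simp only [h, if_true, if_pos]
        rw [hLsum, hE, hE']
        simp
      · simp only [h, if_false]
        rw [← Finset.sum_mul, hLsum]
        rcases le_total E E' with hle | hle
        · have hME : M = E' := by rw [hMdef]; exact max_eq_right hle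
          rw [max_eq_right (by linarith : E - E' ≤ 0), hME]
          field_simp
          simp
        · have hME : M = E := by rw [hMdef]; exact max_eq_left hle
          rw [max_eq_left (by linarith : (0:ℝ) ≤ E - E'), hME]
          have hEne : E ≠ 0 := by rw [← hME]; exact h
          field_simp
    · -- fv total
      dsimp only
      rw [show z' v - z v = -(z v - z' v) by ring, hzv]
      by_cases h : M = 0
      · have hE : E = 0 := le_antisymm (hEM.trans h.le) hE0
        have hE' : E' = 0 := le_antisymm (hE'M.trans h.le) hE'0
        simp only [h, if_true, if_pos]
        rw [hFsum, hE, hE']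
        simp
      · simp only [h, if_false]
        rw [← Finset.sum_mul, hFsum]
        rcases le_total E E' with hle | hle
        · have hME : M = E' := by rw [hMdef]; exact max_eq_right hle
          rw [show -(E - E') = E' - E by ring, max_eq_left (by linarith : (0:ℝ) ≤ E' - E), hME]
          have hEne : E' ≠ 0 := by rw [← hME]; exact h
          field_simp
        · have hME : M = E := by rw [hMdef]; exact max_eq_left hle
          rw [show -(E - E') = E' - E by ring, max_eq_right (by linarith : E' - E ≤ 0), hME]
          field_simp
          simp
    · -- cost
      dsimp only
      have hsplit : ∑ a ∈ leavesBelow r par v, ∑ b ∈ leavesBelow r par v,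
            ((∑ c ∈ C, ζf c a b) + (if M = 0 then (0:ℝ) else L a * F b / M)) * treeDist r par w a b
          = (∑ c ∈ C, ∑ a ∈ leavesBelow r par c, ∑ b ∈ leavesBelow r par c,
              ζf c a b * treeDist r par w a b)
            + ∑ a ∈ leavesBelow r par v, ∑ b ∈ leavesBelow r par v,
                (if M = 0 then (0:ℝ) else L a * F b / M) * treeDist r par w a b := by
        simp only [add_mul, Finset.sum_add_distrib]
        congr 1
        calc ∑ a ∈ leavesBelow r par v, ∑ b ∈ leavesBelow r par v,
              (∑ c ∈ C, ζf c a b) * treeDist r par w a b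
            = ∑ a ∈ leavesBelow r par v, ∑ c ∈ C, ∑ b ∈ leavesBelow r par v,
                ζf c a b * treeDist r par w a b := by
              refine Finset.sum_congr rfl fun a _ => ?_
              calc ∑ b ∈ leavesBelow r par v, (∑ c ∈ C, ζf c a b) * treeDist r par w a b
                  = ∑ b ∈ leavesBelow r par v, ∑ c ∈ C, ζf c a b * treeDist r par w a b :=
                    Finset.sum_congr rfl fun b _ => Finset.sum_mul _ _ _
                _ = ∑ c ∈ C, ∑ b ∈ leavesBelow r par v, ζf c a b * treeDist r par w a b :=
                    Finset.sum_comm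
          _ = ∑ c ∈ C, ∑ a ∈ leavesBelow r par v, ∑ b ∈ leavesBelow r par v,
                ζf c a b * treeDist r par w a b := Finset.sum_comm
          _ = ∑ c ∈ C, ∑ a ∈ leavesBelow r par c, ∑ b ∈ leavesBelow r par c,
                ζf c a b * treeDist r par w a b := by
              refine Finset.sum_congr rfl fun c hc => ?_
              rw [hrestr c hc _ (fun a h0 => ?_)]
              · refine Finset.sum_congr rfl fun a _ => ?_
                exact hrestr c hc _
                  (fun b h0 => (hsupp c hc a b (left_ne_zero_of_mul h0)).2)
              · obtain ⟨b, _, hb0⟩ := Finset.exists_ne_zero_of_sum_ne_zero h0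
                exact (hsupp c hc a b (left_ne_zero_of_mul hb0)).1
      have hγpos : ∀ a b, (0:ℝ) ≤ (if M = 0 then (0:ℝ) else L a * F b / M) := by
        intro a b
        split
        · exact le_rfl
        · have hMpos : 0 < M := lt_of_le_of_ne (hE0.trans hEM) (Ne.symm (by assumption))
          exact div_nonneg (mul_nonneg (hLpos a) (hFpos b)) hMpos.le
      have hγbound : ∑ a ∈ leavesBelow r par v, ∑ b ∈ leavesBelow r par v,
            (if M = 0 then (0:ℝ) else L a * F b / M) * treeDist r par w a b
          ≤ ∑ a ∈ leavesBelow r par v, (if M = 0 then (0:ℝ) else L a * E' / M) * Wt r par w v a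
            + ∑ b ∈ leavesBelow r par v,
                (if M = 0 then (0:ℝ) else E * F b / M) * Wt r par w v b := by
        have step1 : ∑ a ∈ leavesBelow r par v, ∑ b ∈ leavesBelow r par v,
              (if M = 0 then (0:ℝ) else L a * F b / M) * treeDist r par w a b
            ≤ ∑ a ∈ leavesBelow r par v, ∑ b ∈ leavesBelow r par v,
              (if M = 0 then (0:ℝ) else L a * F b / M) * (Wt r par w v a + Wt r par w v b) := by
          refine Finset.sum_le_sum fun a ha => Finset.sum_le_sum fun b hb => ?_
          exact mul_le_mul_of_nonneg_left (treeDist_le hroot hreach hw ha hb) (hγpos a b)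
        refine step1.trans (le_of_eq ?_)
        calc ∑ a ∈ leavesBelow r par v, ∑ b ∈ leavesBelow r par v,
              (if M = 0 then (0:ℝ) else L a * F b / M) * (Wt r par w v a + Wt r par w v b)
            = ∑ a ∈ leavesBelow r par v, ((∑ b ∈ leavesBelow r par v,
                (if M = 0 then (0:ℝ) else L a * F b / M)) * Wt r par w v a
              + ∑ b ∈ leavesBelow r par v,
                (if M = 0 then (0:ℝ) else L a * F b / M) * Wt r par w v b) := by
              refine Finset.sum_congr rfl fun a _ => ?_
              rw [Finset.sum_mul, ← Finset.sum_add_distrib]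
              refine Finset.sum_congr rfl fun b _ => ?_
              ring
          _ = ∑ a ∈ leavesBelow r par v, (if M = 0 then (0:ℝ) else L a * E' / M) * Wt r par w v a
              + ∑ b ∈ leavesBelow r par v, (∑ a ∈ leavesBelow r par v,
                  (if M = 0 then (0:ℝ) else L a * F b / M)) * Wt r par w v b := by
              rw [Finset.sum_add_distrib]
              congr 1
              · exact Finset.sum_congr rfl fun a _ => by rw [hrowγ a]
              · rw [Finset.sum_comm]
                exact Finset.sum_congr rfl fun b _ => (Finset.sum_mul _ _ _).symm
          _ = _ := by
              congr 1
              exact Finset.sum_congr rfl fun b _ => by rw [hcolγ b]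
      have hLW : ∑ a ∈ leavesBelow r par v, (if M = 0 then (0:ℝ) else L a * E' / M) * Wt r par w v a
          + ∑ a ∈ leavesBelow r par v,
              (if M = 0 then L a else L a * ((M - E') / M)) * Wt r par w v a
          = ∑ a ∈ leavesBelow r par v, L a * Wt r par w v a := by
        rw [← Finset.sum_add_distrib]
        refine Finset.sum_congr rfl fun a _ => ?_
        rw [← add_mul, hrowfull a]
      have hFW : ∑ b ∈ leavesBelow r par v, (if M = 0 then (0:ℝ) else E * F b / M) * Wt r par w v b
          + ∑ b ∈ leavesBelow r par v,
              (if M = 0 then F b else F b * ((M - E) / M)) * Wt r par w v b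
          = ∑ b ∈ leavesBelow r par v, F b * Wt r par w v b := by
        rw [← Finset.sum_add_distrib]
        refine Finset.sum_congr rfl fun b _ => ?_
        rw [← add_mul, hcolfull b]
      have hLWval : ∑ a ∈ leavesBelow r par v, L a * Wt r par w v a
          = ∑ c ∈ C, (max (z c - z' c) 0 * w c
              + ∑ a ∈ leavesBelow r par c, lf c a * Wt r par w c a) := by
        calc ∑ a ∈ leavesBelow r par v, L a * Wt r par w v a
            = ∑ a ∈ leavesBelow r par v, ∑ c ∈ C, lf c a * Wt r par w v a :=
              Finset.sum_congr rfl fun a _ => Finset.sum_mul _ _ _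
          _ = ∑ c ∈ C, ∑ a ∈ leavesBelow r par v, lf c a * Wt r par w v a := Finset.sum_comm
          _ = ∑ c ∈ C, ∑ a ∈ leavesBelow r par c, lf c a * Wt r par w v a :=
              Finset.sum_congr rfl fun c hc => hrestr c hc _
                (fun a h0 => hlsupp c hc a (left_ne_zero_of_mul h0))
          _ = ∑ c ∈ C, (max (z c - z' c) 0 * w c
              + ∑ a ∈ leavesBelow r par c, lf c a * Wt r par w c a) := by
              refine Finset.sum_congr rfl fun c hc => ?_
              calc ∑ a ∈ leavesBelow r par c, lf c a * Wt r par w v a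
                  = ∑ a ∈ leavesBelow r par c, (lf c a * w c + lf c a * Wt r par w c a) := by
                    refine Finset.sum_congr rfl fun a ha => ?_
                    rw [Wt_child hroot hreach hc ha]
                    ring
                _ = (∑ a ∈ leavesBelow r par c, lf c a) * w c
                    + ∑ a ∈ leavesBelow r par c, lf c a * Wt r par w c a := by
                    rw [Finset.sum_add_distrib, Finset.sum_mul]
                _ = _ := by rw [hlsum c hc]
      have hFWval : ∑ b ∈ leavesBelow r par v, F b * Wt r par w v b
          = ∑ c ∈ C, (max (z' c - z c) 0 * w c
              + ∑ b ∈ leavesBelow r par c, ff c b * Wt r par w c b) := by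
        calc ∑ b ∈ leavesBelow r par v, F b * Wt r par w v b
            = ∑ b ∈ leavesBelow r par v, ∑ c ∈ C, ff c b * Wt r par w v b :=
              Finset.sum_congr rfl fun b _ => Finset.sum_mul _ _ _
          _ = ∑ c ∈ C, ∑ b ∈ leavesBelow r par v, ff c b * Wt r par w v b := Finset.sum_comm
          _ = ∑ c ∈ C, ∑ b ∈ leavesBelow r par c, ff c b * Wt r par w v b :=
              Finset.sum_congr rfl fun c hc => hrestr c hc _
                (fun b h0 => hfsupp c hc b (left_ne_zero_of_mul h0))
          _ = ∑ c ∈ C, (max (z' c - z c) 0 * w c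
              + ∑ b ∈ leavesBelow r par c, ff c b * Wt r par w c b) := by
              refine Finset.sum_congr rfl fun c hc => ?_
              calc ∑ b ∈ leavesBelow r par c, ff c b * Wt r par w v b
                  = ∑ b ∈ leavesBelow r par c, (ff c b * w c + ff c b * Wt r par w c b) := by
                    refine Finset.sum_congr rfl fun b hb => ?_
                    rw [Wt_child hroot hreach hc hb]
                    ring
                _ = (∑ b ∈ leavesBelow r par c, ff c b) * w c
                    + ∑ b ∈ leavesBelow r par c, ff c b * Wt r par w c b := by
                    rw [Finset.sum_add_distrib, Finset.sum_mul]
                _ = _ := by rw [hfsum c hc]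
      have hfinal : (∑ c ∈ C, ∑ a ∈ leavesBelow r par c, ∑ b ∈ leavesBelow r par c,
              ζf c a b * treeDist r par w a b)
            + ∑ a ∈ leavesBelow r par v, L a * Wt r par w v a
            + ∑ b ∈ leavesBelow r par v, F b * Wt r par w v b
          ≤ ∑ u ∈ strictBelow r par v, w u * |z u - z' u| := by
        rw [hLWval, hFWval, budget_split hroot hreach v (fun u => w u * |z u - z' u|),
          ← Finset.sum_add_distrib, ← Finset.sum_add_distrib]
        refine Finset.sum_le_sum fun c hc => ?_
        have h1 := hcost c hc
        have h2 : max (z c - z' c) 0 * w c + max (z' c - z c) 0 * w c = w c * |z c - z' c| := by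
          have h3 := max_add_max_neg (z c - z' c)
          have h4 : z' c - z c = -(z c - z' c) := by ring
          rw [h4, ← add_mul, h3, mul_comm]
        linarith
      linarith [hsplit, hγbound, hLW, hFW, hfinal]

end Key

section Final
variable {V : Type*} [Fintype V] {r : V} {par : V → V} {w : V → ℝ}

lemma coupling_lower_bound (hroot : par r = r) (hreach : ∀ v : V, ∃ n : ℕ, par^[n] v = r)
    (hw : ∀ v, 0 ≤ w v) {z z' : V → ℝ}
    (hzs : ∀ u, ¬ IsLeaf r par u → z u = ∑ c ∈ children r par u, z c)
    (hzs' : ∀ u, ¬ IsLeaf r par u → z' u = ∑ c ∈ children r par u, z' c)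
    (ζ : V → V → ℝ) (hζpos : ∀ a ∈ leaves r par, ∀ b ∈ leaves r par, 0 ≤ ζ a b)
    (hrow : ∀ a ∈ leaves r par, ∑ b ∈ leaves r par, ζ a b = z a)
    (hcol : ∀ b ∈ leaves r par, ∑ a ∈ leaves r par, ζ a b = z' b) :
    ∑ v : V, w v * |z v - z' v|
      ≤ ∑ a ∈ leaves r par, ∑ b ∈ leaves r par, ζ a b * treeDist r par w a b := by
  have hind : ∀ (u : V) (y : V → ℝ), ∑ a ∈ leaves r par,
      y a * (if a ∈ leavesBelow r par u then (1:ℝ) else 0) = ∑ a ∈ leavesBelow r par u, y a := by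
    intro u y
    rw [leavesBelow, Finset.sum_filter]
    refine Finset.sum_congr rfl fun a ha => ?_
    by_cases hp : ∃ n : ℕ, par^[n] a = u
    · simp [Finset.mem_filter, ha, hp]
    · simp [Finset.mem_filter, hp]
  have e1 : ∑ a ∈ leaves r par, ∑ b ∈ leaves r par, ζ a b * treeDist r par w a b
      = ∑ u : V, ∑ a ∈ leaves r par, ∑ b ∈ leaves r par,
          ζ a b * (w u * |(if a ∈ leavesBelow r par u then (1:ℝ) else 0)
            - (if b ∈ leavesBelow r par u then (1:ℝ) else 0)|) := by
    calc ∑ a ∈ leaves r par, ∑ b ∈ leaves r par, ζ a b * treeDist r par w a b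
        = ∑ a ∈ leaves r par, ∑ u : V, ∑ b ∈ leaves r par,
            ζ a b * (w u * |(if a ∈ leavesBelow r par u then (1:ℝ) else 0)
              - (if b ∈ leavesBelow r par u then (1:ℝ) else 0)|) := by
          refine Finset.sum_congr rfl fun a _ => ?_
          calc ∑ b ∈ leaves r par, ζ a b * treeDist r par w a b
              = ∑ b ∈ leaves r par, ∑ u : V,
                  ζ a b * (w u * |(if a ∈ leavesBelow r par u then (1:ℝ) else 0)
                    - (if b ∈ leavesBelow r par u then (1:ℝ) else 0)|) := by
                refine Finset.sum_congr rfl fun b _ => ?_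
                rw [treeDist, Finset.mul_sum]
            _ = _ := Finset.sum_comm
      _ = _ := Finset.sum_comm
  rw [e1]
  refine Finset.sum_le_sum fun u _ => ?_
  have e2 : ∑ a ∈ leaves r par, ∑ b ∈ leaves r par,
      ζ a b * (w u * |(if a ∈ leavesBelow r par u then (1:ℝ) else 0)
        - (if b ∈ leavesBelow r par u then (1:ℝ) else 0)|)
      = w u * ∑ a ∈ leaves r par, ∑ b ∈ leaves r par,
          ζ a b * |(if a ∈ leavesBelow r par u then (1:ℝ) else 0)
            - (if b ∈ leavesBelow r par u then (1:ℝ) else 0)| := by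
    rw [Finset.mul_sum]
    refine Finset.sum_congr rfl fun a _ => ?_
    rw [Finset.mul_sum]
    refine Finset.sum_congr rfl fun b _ => ?_
    ring
  rw [e2]
  refine mul_le_mul_of_nonneg_left ?_ (hw u)
  -- |z u - z' u| ≤ ∑∑ ζ |ia - ib|
  have e3 : z u - z' u = ∑ a ∈ leaves r par, ∑ b ∈ leaves r par,
      ζ a b * ((if a ∈ leavesBelow r par u then (1:ℝ) else 0)
        - (if b ∈ leavesBelow r par u then (1:ℝ) else 0)) := by
    have t1 : ∑ a ∈ leaves r par, ∑ b ∈ leaves r par,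
        ζ a b * (if a ∈ leavesBelow r par u then (1:ℝ) else 0) = z u := by
      rw [mass_eq hroot hreach hzs u, ← hind u z]
      refine Finset.sum_congr rfl fun a ha => ?_
      rw [← Finset.sum_mul, hrow a ha]
    have t2 : ∑ a ∈ leaves r par, ∑ b ∈ leaves r par,
        ζ a b * (if b ∈ leavesBelow r par u then (1:ℝ) else 0) = z' u := by
      rw [Finset.sum_comm, mass_eq hroot hreach hzs' u, ← hind u z']
      refine Finset.sum_congr rfl fun b hb => ?_
      rw [← Finset.sum_mul, hcol b hb]
    calc z u - z' u
        = ∑ a ∈ leaves r par, ∑ b ∈ leaves r par,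
            (ζ a b * (if a ∈ leavesBelow r par u then (1:ℝ) else 0)
              - ζ a b * (if b ∈ leavesBelow r par u then (1:ℝ) else 0)) := by
          rw [← t1, ← t2, ← Finset.sum_sub_distrib]
          exact Finset.sum_congr rfl fun a _ => by rw [← Finset.sum_sub_distrib]
      _ = _ := by
          refine Finset.sum_congr rfl fun a _ => Finset.sum_congr rfl fun b _ => ?_
          ring
  calc |z u - z' u|
      = |∑ a ∈ leaves r par, ∑ b ∈ leaves r par,
          ζ a b * ((if a ∈ leavesBelow r par u then (1:ℝ) else 0)
            - (if b ∈ leavesBelow r par u then (1:ℝ) else 0))| := by rw [e3]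
    _ ≤ ∑ a ∈ leaves r par, |∑ b ∈ leaves r par,
          ζ a b * ((if a ∈ leavesBelow r par u then (1:ℝ) else 0)
            - (if b ∈ leavesBelow r par u then (1:ℝ) else 0))| := Finset.abs_sum_le_sum_abs _ _
    _ ≤ ∑ a ∈ leaves r par, ∑ b ∈ leaves r par,
          |ζ a b * ((if a ∈ leavesBelow r par u then (1:ℝ) else 0)
            - (if b ∈ leavesBelow r par u then (1:ℝ) else 0))| :=
        Finset.sum_le_sum fun a _ => Finset.abs_sum_le_sum_abs _ _
    _ = ∑ a ∈ leaves r par, ∑ b ∈ leaves r par,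
          ζ a b * |(if a ∈ leavesBelow r par u then (1:ℝ) else 0)
            - (if b ∈ leavesBelow r par u then (1:ℝ) else 0)| := by
        refine Finset.sum_congr rfl fun a ha => Finset.sum_congr rfl fun b hb => ?_
        rw [abs_mul, abs_of_nonneg (hζpos a ha b hb)]

end Final

/-- Existence of an optimal tree coupling: for `z, z′ ∈ K_T`, the weighted ℓ1 distance
`Σ_v w_v |z_v − z′_v|` is the least transport cost over all couplings of the induced leaf
distributions; in particular some coupling attains it and it equals the infimum (the
Wasserstein-1 distance in the tree metric). -/
theorem optimal_tree_coupling {V : Type*} [Fintype V]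
    (r : V) (par : V → V)
    (hroot : par r = r)
    (hreach : ∀ v : V, ∃ n : ℕ, par^[n] v = r)
    (w : V → ℝ) (hw : ∀ v, 0 ≤ w v)
    (z z' : V → ℝ)
    (hz : (∀ v, 0 ≤ z v) ∧ z r = 1 ∧
      ∀ u, ¬ IsLeaf r par u → z u = ∑ v ∈ children r par u, z v)
    (hz' : (∀ v, 0 ≤ z' v) ∧ z' r = 1 ∧
      ∀ u, ¬ IsLeaf r par u → z' u = ∑ v ∈ children r par u, z' v) :
    IsLeast {c : ℝ | ∃ ζ : V → V → ℝ,
        (∀ a ∈ leaves r par, ∀ b ∈ leaves r par, 0 ≤ ζ a b) ∧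
        (∀ a ∈ leaves r par, ∑ b ∈ leaves r par, ζ a b = z a) ∧
        (∀ b ∈ leaves r par, ∑ a ∈ leaves r par, ζ a b = z' b) ∧
        c = ∑ a ∈ leaves r par, ∑ b ∈ leaves r par, ζ a b * treeDist r par w a b}
      (∑ v : V, w v * |z v - z' v|) := by
  obtain ⟨hz0, hzr, hzs⟩ := hz
  obtain ⟨hz0', hzr', hzs'⟩ := hz'
  have hLB : leavesBelow r par r = leaves r par := leavesBelow_root hreach
  obtain ⟨ζ, lv, fv, hpos, hlpos, hfpos, hsupp, hlsupp, hfsupp, hmarg, hmarg', hlsum, hfsum,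
    hcost⟩ := key_construction hroot hreach hw hz0 hz0' hzs hzs' r
  rw [hLB] at hmarg hmarg' hlsum hfsum hcost
  have hlv0 : ∀ a ∈ leaves r par, lv a = 0 := by
    have h0 : ∑ a ∈ leaves r par, lv a = 0 := by
      rw [hlsum, hzr, hzr']; simp
    exact (Finset.sum_eq_zero_iff_of_nonneg (fun a _ => hlpos a)).mp h0
  have hfv0 : ∀ b ∈ leaves r par, fv b = 0 := by
    have h0 : ∑ b ∈ leaves r par, fv b = 0 := by
      rw [hfsum, hzr, hzr']; simp
    exact (Finset.sum_eq_zero_iff_of_nonneg (fun b _ => hfpos b)).mp h0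
  have hrow : ∀ a ∈ leaves r par, ∑ b ∈ leaves r par, ζ a b = z a := by
    intro a ha
    have := hmarg a ha
    rw [hlv0 a ha, add_zero] at this
    exact this
  have hcol : ∀ b ∈ leaves r par, ∑ a ∈ leaves r par, ζ a b = z' b := by
    intro b hb
    have := hmarg' b hb
    rw [hfv0 b hb, add_zero] at this
    exact this
  have hupper : ∑ a ∈ leaves r par, ∑ b ∈ leaves r par, ζ a b * treeDist r par w a b
      ≤ ∑ v : V, w v * |z v - z' v| := by
    have h1 : ∑ a ∈ leaves r par, lv a * Wt r par w r a = 0 :=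
      Finset.sum_eq_zero fun a ha => by rw [hlv0 a ha, zero_mul]
    have h2 : ∑ b ∈ leaves r par, fv b * Wt r par w r b = 0 :=
      Finset.sum_eq_zero fun b hb => by rw [hfv0 b hb, zero_mul]
    have h3 : ∑ u ∈ strictBelow r par r, w u * |z u - z' u| ≤ ∑ v : V, w v * |z v - z' v| :=
      Finset.sum_le_sum_of_subset_of_nonneg (Finset.subset_univ _)
        (fun u _ _ => mul_nonneg (hw u) (abs_nonneg _))
    rw [h1, h2] at hcost
    linarith
  have hlower := coupling_lower_bound hroot hreach hw hzs hzs'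
    ζ (fun a _ b _ => hpos a b) hrow hcol
  constructor
  · exact ⟨ζ, (fun a _ b _ => hpos a b), hrow, hcol, le_antisymm hlower hupper⟩
  · rintro c ⟨ζ', h1, h2, h3, rfl⟩
    exact coupling_lower_bound hroot hreach hw hzs hzs' ζ' h1 h2 h3
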